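/- The endemic equilibrium values E* = (μ+ρ)(μ+τ+γ)D/(βεC), I* = (μ+ρ)D/(βC), R* = γD/(βC), where D = hNβε - μ(μ+ε)(μ+τ+γ) and C = (μ+ρ)(μ+ε)(μ+τ+γ) - γερ, together with S* = (μ+ε)(μ+τ+γ)/(βε), satisfy all four equilibrium equations: hN - μS* - βS*I* + ρR* = 0, βS*I* - (μ+ε)E* = 0, εE* - (μ+τ+γ)I* = 0, and γI* - (μ+ρ)R* = 0. -/

import Mathlib

theorem endemic_equilibrium_satisfies_equations
    (h μ β ρ ε τ γ N : ℝ)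
    (hh : 0 < h) (hμ : 0 < μ) (hβ : 0 < β) (hρ : 0 < ρ)
    (hε : 0 < ε) (hτ : 0 < τ) (hγ : 0 < γ) (hN : 0 < N)
    (D C Sstar Estar Istar Rstar : ℝ)
    (hD : D = h * N * β * ε - μ * (μ + ε) * (μ + τ + γ))
    (hC : C = (μ + ρ) * (μ + ε) * (μ + τ + γ) - γ * ε * ρ)
    (hCne : C ≠ 0)
    (hSstar : Sstar = (μ + ε) * (μ + τ + γ) / (β * ε))
    (hEstar : Estar = (μ + ρ) * (μ + τ + γ) * D / (β * ε * C))
    (hIstar : Istar = (μ + ρ) * D / (β * C))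
    (hRstar : Rstar = γ * D / (β * C)) :
    h * N - μ * Sstar - β * Sstar * Istar + ρ * Rstar = 0 ∧
    β * Sstar * Istar - (μ + ε) * Estar = 0 ∧
    ε * Estar - (μ + τ + γ) * Istar = 0 ∧
    γ * Istar - (μ + ρ) * Rstar = 0 := by
  have hβ' : β ≠ 0 := hβ.ne'
  have hε' : ε ≠ 0 := hε.ne'
  subst hD hSstar hEstar hIstar hRstar
  refine ⟨?_, ?_, ?_, ?_⟩ <;> field_simp <;> subst hC <;> ring
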